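/- arXiv:2005.14033 — 2 statements merged into one kernel-verified Lean document; each statement's English description precedes it below -/
import Mathlib

section
/- Let F be an integrable random variable on a probability space, let Z and Z' be random variables, and let A be an event measurable with respect to both σ(Z) and σ(Z'). If Z' · 1_A = Z · 1_A almost surely, then E[F | σ(Z')] · 1_A = E[F | σ(Z)] · 1_A almost surely. -/
open MeasureTheory Set

/-- Doob–Dynkin: a real-valued function measurable w.r.t. `σ(Z)` factors through `Z`. -/
lemma doobDynkin_aux {Ω : Type*} (Z : Ω → ℝ) (h : Ω → ℝ)
    (hh : Measurable[MeasurableSpace.comap Z (borel ℝ)] h) :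
    ∃ g : ℝ → ℝ, Measurable g ∧ ∀ ω, h ω = g (Z ω) := by
  classical
  have hS : ∀ q : ℚ, ∃ S : Set ℝ, MeasurableSet S ∧ Z ⁻¹' S = {ω | h ω ≤ (q : ℝ)} := by
    intro q
    have hmeas : MeasurableSet[MeasurableSpace.comap Z (borel ℝ)] {ω | h ω ≤ (q : ℝ)} :=
      hh measurableSet_Iic
    obtain ⟨S, hSm, hSp⟩ := MeasurableSpace.measurableSet_comap.mp hmeas
    exact ⟨S, hSm, hSp⟩
  choose S hSm hSp using hS
  set G : ℝ → EReal := fun x => ⨅ q : ℚ, (S q).piecewise (fun _ => ((q : ℝ) : EReal))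
    (fun _ => (⊤ : EReal)) x with hGdef
  have hGmeas : Measurable G :=
    Measurable.iInf fun q => Measurable.piecewise (hSm q) measurable_const measurable_const
  have hmem : ∀ q : ℚ, ∀ ω, Z ω ∈ S q ↔ h ω ≤ (q : ℝ) := by
    intro q ω
    constructor
    · intro hx
      have : ω ∈ Z ⁻¹' S q := hx
      rw [hSp q] at this; exact this
    · intro hx
      have : ω ∈ {ω | h ω ≤ (q : ℝ)} := hx
      rw [← hSp q] at this; exact this
  have hGZ : ∀ ω, G (Z ω) = ((h ω : ℝ) : EReal) := by
    intro ω
    apply le_antisymm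
    · by_contra hlt
      push_neg at hlt
      obtain ⟨q, hq1, hq2⟩ := EReal.lt_iff_exists_rat_btwn.mp hlt
      have hmemq : Z ω ∈ S q := by
        rw [hmem q ω]
        exact_mod_cast le_of_lt (by exact_mod_cast hq1)
      have : G (Z ω) ≤ ((q : ℝ) : EReal) := by
        refine iInf_le_of_le q ?_
        rw [Set.piecewise_eq_of_mem _ _ _ hmemq]
      exact absurd (this.trans_lt hq2) (lt_irrefl _)
    · refine le_iInf fun q => ?_
      by_cases hx : Z ω ∈ S q
      · rw [Set.piecewise_eq_of_mem _ _ _ hx]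
        exact_mod_cast (hmem q ω).mp hx
      · rw [Set.piecewise_eq_of_notMem _ _ _ hx]
        exact le_top
  refine ⟨fun x => (G x).toReal, measurable_ereal_toReal.comp hGmeas, fun ω => ?_⟩
  show h ω = (G (Z ω)).toReal
  rw [hGZ ω, EReal.toReal_coe]

/-- If `A` is measurable w.r.t. both `σ(Z)` and `σ(Z')`, and `Z' 1_A = Z 1_A` a.s.,
then `E[F|σ(Z')] 1_A = E[F|σ(Z)] 1_A` a.s. -/
theorem stmt0 {Ω : Type*} [MeasurableSpace Ω] {P : Measure Ω} [IsProbabilityMeasure P]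
    (F Z Z' : Ω → ℝ) (hF : Integrable F P) (hZ : Measurable Z) (hZ' : Measurable Z')
    (A : Set Ω)
    (hAZ : MeasurableSet[MeasurableSpace.comap Z (borel ℝ)] A)
    (hAZ' : MeasurableSet[MeasurableSpace.comap Z' (borel ℝ)] A)
    (h : ∀ᵐ ω ∂P, Z' ω * A.indicator (fun _ => (1:ℝ)) ω = Z ω * A.indicator (fun _ => (1:ℝ)) ω) :
    ∀ᵐ ω ∂P,
      (P[F | MeasurableSpace.comap Z' (borel ℝ)]) ω * A.indicator (fun _ => (1:ℝ)) ω =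
      (P[F | MeasurableSpace.comap Z (borel ℝ)]) ω * A.indicator (fun _ => (1:ℝ)) ω := by
  classical
  have hmZ : MeasurableSpace.comap Z (borel ℝ) ≤ (inferInstance : MeasurableSpace Ω) :=
    hZ.comap_le
  have hmZ' : MeasurableSpace.comap Z' (borel ℝ) ≤ (inferInstance : MeasurableSpace Ω) :=
    hZ'.comap_le
  have hA : MeasurableSet A := hmZ A hAZ
  -- a.e. on A, Z = Z'
  have hAZeq : ∀ᵐ ω ∂P, ω ∈ A → Z ω = Z' ω := by
    filter_upwards [h] with ω hω hmem
    simpa [Set.indicator_of_mem hmem] using hω.symm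
  -- the function of interest
  set f : Ω → ℝ := A.indicator F with hfdef
  have hfInt : Integrable f P := hF.indicator hA
  -- preimage sets agree a.e. within A
  have hsetae : ∀ T : Set ℝ, ((Z' ⁻¹' T) ∩ A : Set Ω) =ᵐ[P] ((Z ⁻¹' T) ∩ A : Set Ω) := by
    intro T
    rw [Filter.eventuallyEq_set]
    filter_upwards [hAZeq] with ω hω
    simp only [Set.mem_inter_iff, Set.mem_preimage]
    constructor
    · rintro ⟨h1, h2⟩; exact ⟨by rw [hω h2]; exact h1, h2⟩
    · rintro ⟨h1, h2⟩; exact ⟨by rw [← hω h2]; exact h1, h2⟩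
  -- condexp of f w.r.t. mZ is a.e. supported on A
  have hind : P[f | MeasurableSpace.comap Z (borel ℝ)] =ᵐ[P] A.indicator (P[f | MeasurableSpace.comap Z (borel ℝ)]) := by
    have h1 : P[f | MeasurableSpace.comap Z (borel ℝ)] =ᵐ[P] A.indicator (P[F | MeasurableSpace.comap Z (borel ℝ)]) := condExp_indicator hF hAZ
    have h2 : P[A.indicator F | MeasurableSpace.comap Z (borel ℝ)] =ᵐ[P] A.indicator (P[A.indicator F | MeasurableSpace.comap Z (borel ℝ)]) := by
      filter_upwards [condExp_indicator hF hAZ, condExp_indicator hfInt hAZ] with ω hω1 hω2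
      by_cases hmem : ω ∈ A
      · rw [Set.indicator_of_mem hmem]
      · rw [Set.indicator_of_notMem hmem, hω1, Set.indicator_of_notMem hmem]
    exact h2
  -- the candidate P[f|mZ] is a.e. strongly measurable w.r.t. mZ'
  have hmeas' : AEStronglyMeasurable[MeasurableSpace.comap Z' (borel ℝ)] (P[f | MeasurableSpace.comap Z (borel ℝ)]) P := by
    have hsm : Measurable[MeasurableSpace.comap Z (borel ℝ)] (P[f | MeasurableSpace.comap Z (borel ℝ)]) :=
      (stronglyMeasurable_condExp (m := MeasurableSpace.comap Z (borel ℝ))).measurable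
    obtain ⟨g, hgmeas, hgeq⟩ := doobDynkin_aux Z (P[f | MeasurableSpace.comap Z (borel ℝ)]) hsm
    refine ⟨A.indicator (fun ω => g (Z' ω)), ?_, ?_⟩
    · apply StronglyMeasurable.indicator _ hAZ'
      apply Measurable.stronglyMeasurable
      exact hgmeas.comp (comap_measurable Z')
    · filter_upwards [hind, hAZeq] with ω hω1 hω2
      rw [hω1]
      by_cases hmem : ω ∈ A
      · rw [Set.indicator_of_mem hmem, Set.indicator_of_mem hmem, hgeq ω, hω2 hmem]
      · rw [Set.indicator_of_notMem hmem, Set.indicator_of_notMem hmem]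
  -- P[f|mZ] is a version of P[f|mZ']
  have hkey : P[f | MeasurableSpace.comap Z (borel ℝ)] =ᵐ[P] P[f | MeasurableSpace.comap Z' (borel ℝ)] := by
    refine ae_eq_condExp_of_forall_setIntegral_eq (f := f) (g := P[f | MeasurableSpace.comap Z (borel ℝ)]) hmZ' hfInt
      (fun s _ _ => integrable_condExp.integrableOn) (fun s hs _ => ?_) hmeas'
    obtain ⟨T, hTm, hTp⟩ := MeasurableSpace.measurableSet_comap.mp hs
    have hTm' : MeasurableSet T := hTm
    -- restrict integrals to A
    have e1 : ∫ x in s, (P[f | MeasurableSpace.comap Z (borel ℝ)]) x ∂P = ∫ x in s ∩ A, (P[f | MeasurableSpace.comap Z (borel ℝ)]) x ∂P := by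
      rw [setIntegral_congr_ae (hmZ' s hs) (hind.mono fun ω hω _ => hω),
        setIntegral_indicator hA]
    have e2 : ∫ x in s, f x ∂P = ∫ x in s ∩ A, f x ∂P := by
      have : ∀ ω, f ω = A.indicator f ω := by
        intro ω
        by_cases hmem : ω ∈ A
        · rw [Set.indicator_of_mem hmem]
        · rw [Set.indicator_of_notMem hmem, hfdef, Set.indicator_of_notMem hmem]
      conv_lhs => rw [show f = A.indicator f from funext this]
      rw [setIntegral_indicator hA]
    rw [e1, e2, ← hTp]
    rw [setIntegral_congr_set (hsetae T), setIntegral_congr_set (hsetae T)]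
    have hZTA : MeasurableSet[MeasurableSpace.comap Z (borel ℝ)] ((Z ⁻¹' T) ∩ A) :=
      (MeasurableSpace.measurableSet_comap.mpr ⟨T, hTm, rfl⟩).inter hAZ
    exact setIntegral_condExp hmZ hfInt hZTA
  -- conclude
  have hcond' : A.indicator (P[F | MeasurableSpace.comap Z' (borel ℝ)]) =ᵐ[P] P[f | MeasurableSpace.comap Z' (borel ℝ)] := (condExp_indicator hF hAZ').symm
  have hcond : P[f | MeasurableSpace.comap Z (borel ℝ)] =ᵐ[P] A.indicator (P[F | MeasurableSpace.comap Z (borel ℝ)]) := condExp_indicator hF hAZ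
  filter_upwards [hcond', hcond, hkey] with ω h1 h2 h3
  by_cases hmem : ω ∈ A
  · have : (P[F | MeasurableSpace.comap Z' (borel ℝ)]) ω = (P[F | MeasurableSpace.comap Z (borel ℝ)]) ω := by
      have l1 : (P[F | MeasurableSpace.comap Z' (borel ℝ)]) ω = (P[f | MeasurableSpace.comap Z' (borel ℝ)]) ω := by
        rw [← h1, Set.indicator_of_mem hmem]
      have l2 : (P[f | MeasurableSpace.comap Z (borel ℝ)]) ω = (P[F | MeasurableSpace.comap Z (borel ℝ)]) ω := by
        rw [h2, Set.indicator_of_mem hmem]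
      rw [l1, ← h3, l2]
    rw [this]
  · simp [Set.indicator_of_notMem hmem]
end

section
/- Let μ₀ be a finite measure on ℝ, u₀ a μ₀-integrable function, t > 0, and suppose x satisfies: x equals the μ₀-average of a ↦ a + t·u₀(a) over the interval [α, β] with α < β and μ₀([α,β]) > 0, and also x = α + t·u₀(α) = β + t·u₀(β). Define u_t(x) = (∫_{[α,β]} u₀ dμ₀)/μ₀([α,β]). Then u₀(β) ≤ u_t(x) ≤ u₀(α). -/
open MeasureTheory Set

/-- Velocity ordering of a cluster: if the cluster `[α,β]` collapses to `x` at time `t`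
(endpoint conditions and barycenter condition), then the cluster velocity lies between
`u₀(β)` and `u₀(α)`. -/
theorem stmt10 (μ₀ : Measure ℝ) [IsFiniteMeasure μ₀] (u₀ : ℝ → ℝ) (t : ℝ) (ht : 0 < t)
    (α β x : ℝ) (hαβ : α < β) (hmass : 0 < μ₀ (Icc α β))
    (hintu : IntegrableOn u₀ (Icc α β) μ₀)
    (hinta : IntegrableOn (fun a => a) (Icc α β) μ₀)
    (hbar : x = (∫ a in Icc α β, (a + t * u₀ a) ∂μ₀) / (μ₀ (Icc α β)).toReal)
    (hα : x = α + t * u₀ α) (hβ : x = β + t * u₀ β) :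
    u₀ β ≤ (∫ a in Icc α β, u₀ a ∂μ₀) / (μ₀ (Icc α β)).toReal ∧
    (∫ a in Icc α β, u₀ a ∂μ₀) / (μ₀ (Icc α β)).toReal ≤ u₀ α := by
  set m : ℝ := (μ₀ (Icc α β)).toReal with hm
  have hμne : μ₀ (Icc α β) ≠ ⊤ := measure_ne_top _ _
  have hmpos : 0 < m := ENNReal.toReal_pos hmass.ne' hμne
  set A : ℝ := ∫ a in Icc α β, a ∂μ₀ with hA
  set U : ℝ := ∫ a in Icc α β, u₀ a ∂μ₀ with hU
  have hsplit : (∫ a in Icc α β, (a + t * u₀ a) ∂μ₀) = A + t * U := by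
    rw [integral_add hinta (hintu.const_mul t), integral_const_mul]
  -- bounds on A
  have hcA : A ≤ β * m := by
    have : A ≤ ∫ _ in Icc α β, β ∂μ₀ := by
      apply setIntegral_mono_on hinta (integrable_const β) measurableSet_Icc
      intro a ha; exact ha.2
    simpa [setIntegral_const, smul_eq_mul, mul_comm, hm, ← measureReal_def] using this
  have hAc : α * m ≤ A := by
    have : (∫ _ in Icc α β, α ∂μ₀) ≤ A := by
      apply setIntegral_mono_on (integrable_const α) hinta measurableSet_Icc
      intro a ha; exact ha.1
    simpa [setIntegral_const, smul_eq_mul, mul_comm, hm, ← measureReal_def] using this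
  -- x * m = A + t * U
  have hx : x * m = A + t * U := by
    rw [hbar, hsplit, div_mul_cancel₀]
    exact hmpos.ne'
  constructor
  · -- u₀ β ≤ U / m, i.e. u₀ β * m ≤ U
    rw [le_div_iff₀ hmpos]
    have h1 : t * (u₀ β * m) = x * m - β * m := by
      rw [hβ]; ring
    nlinarith [hcA, hx]
  · rw [div_le_iff₀ hmpos]
    have h1 : t * (u₀ α * m) = x * m - α * m := by
      rw [hα]; ring
    nlinarith [hAc, hx]
end
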